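/- Under Assumptions 1, 2, 3 and 4, the gradient error of the IN method satisfies, for all k ≥ 2, ‖e^k‖ ≤ C·(γ^k + 1/k)·B^k(φ)·‖∇f(x_1^k)‖, where B^k(φ) = Σ_{j=2}^m B_j^k(φ) and B_j^k(φ) is defined by B_1^k(φ) = 0 and B_{i+1}^k(φ) = (1 + (2Q/m)·max(1/k, φ))·B_i^k(φ) + 2M/(cm). -/

import Mathlib

open Finset Filter Classical

noncomputable def Bseq (r s : ℝ) : ℕ → ℝ
  | 0 => 0
  | (i+1) => r * Bseq r s i + s

section AuxIN
open Matrix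
variable {n : ℕ}

lemma inner_toECLM (A : Matrix (Fin n) (Fin n) ℝ) (x y : EuclideanSpace ℝ (Fin n)) :
    (inner ℝ x (Matrix.toEuclideanCLM (𝕜 := ℝ) A y) : ℝ)
      = (WithLp.equiv 2 (Fin n → ℝ) x) ⬝ᵥ (A *ᵥ (WithLp.equiv 2 (Fin n → ℝ) y)) := by
  exact Matrix.inner_toEuclideanCLM A x y

lemma qf_nonneg {A : Matrix (Fin n) (Fin n) ℝ} (hA : A.PosSemidef)
    (x : EuclideanSpace ℝ (Fin n)) :
    0 ≤ (inner ℝ x (Matrix.toEuclideanCLM (𝕜 := ℝ) A x) : ℝ) := by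
  rw [inner_toECLM]
  simpa [star_trivial] using (Matrix.posSemidef_iff_dotProduct_mulVec.mp hA).2 (WithLp.equiv 2 (Fin n → ℝ) x)

lemma qf_sub_smul_one (A : Matrix (Fin n) (Fin n) ℝ) (a : ℝ) (x : EuclideanSpace ℝ (Fin n)) :
    (inner ℝ x (Matrix.toEuclideanCLM (𝕜 := ℝ) (A - a • 1) x) : ℝ)
      = (inner ℝ x (Matrix.toEuclideanCLM (𝕜 := ℝ) A x) : ℝ) - a * ‖x‖ ^ 2 := by
  rw [map_sub, _root_.map_smul, _root_.map_one, ContinuousLinearMap.sub_apply, inner_sub_right,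
    ContinuousLinearMap.smul_apply, ContinuousLinearMap.one_apply, real_inner_smul_right,
    real_inner_self_eq_norm_sq]

lemma qf_lower {A : Matrix (Fin n) (Fin n) ℝ} {a : ℝ} (hA : (A - a • 1).PosSemidef)
    (x : EuclideanSpace ℝ (Fin n)) :
    a * ‖x‖ ^ 2 ≤ (inner ℝ x (Matrix.toEuclideanCLM (𝕜 := ℝ) A x) : ℝ) := by
  have := qf_nonneg hA x
  rw [qf_sub_smul_one] at this
  linarith

lemma qf_upper {A : Matrix (Fin n) (Fin n) ℝ} {b : ℝ} (hA : (b • 1 - A).PosSemidef)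
    (x : EuclideanSpace ℝ (Fin n)) :
    (inner ℝ x (Matrix.toEuclideanCLM (𝕜 := ℝ) A x) : ℝ) ≤ b * ‖x‖ ^ 2 := by
  have h0 := qf_nonneg hA x
  have : (inner ℝ x (Matrix.toEuclideanCLM (𝕜 := ℝ) (b • 1 - A) x) : ℝ)
      = b * ‖x‖ ^ 2 - (inner ℝ x (Matrix.toEuclideanCLM (𝕜 := ℝ) A x) : ℝ) := by
    rw [map_sub, _root_.map_smul, _root_.map_one, ContinuousLinearMap.sub_apply, inner_sub_right,
      ContinuousLinearMap.smul_apply, ContinuousLinearMap.one_apply, real_inner_smul_right,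
      real_inner_self_eq_norm_sq]
  linarith [this ▸ h0]

lemma qf_symm {A : Matrix (Fin n) (Fin n) ℝ} (hA : A.IsHermitian)
    (x y : EuclideanSpace ℝ (Fin n)) :
    (inner ℝ x (Matrix.toEuclideanCLM (𝕜 := ℝ) A y) : ℝ)
      = (inner ℝ y (Matrix.toEuclideanCLM (𝕜 := ℝ) A x) : ℝ) := by
  rw [inner_toECLM, inner_toECLM, Matrix.dotProduct_mulVec, ← Matrix.mulVec_transpose,
    dotProduct_comm]
  have := hA.eq
  rw [Matrix.conjTranspose_eq_transpose_of_trivial] at this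
  rw [this]

lemma qf_cs {A : Matrix (Fin n) (Fin n) ℝ} (hA : A.PosSemidef)
    (u v : EuclideanSpace ℝ (Fin n)) :
    (inner ℝ u (Matrix.toEuclideanCLM (𝕜 := ℝ) A v) : ℝ) ^ 2
      ≤ (inner ℝ u (Matrix.toEuclideanCLM (𝕜 := ℝ) A u) : ℝ)
        * (inner ℝ v (Matrix.toEuclideanCLM (𝕜 := ℝ) A v) : ℝ) := by
  set T := Matrix.toEuclideanCLM (𝕜 := ℝ) A with hT
  have hsym := qf_symm hA.1
  have key : ∀ t : ℝ, 0 ≤ (inner ℝ v (T v) : ℝ) * (t * t)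
      + (2 * (inner ℝ u (T v) : ℝ)) * t + (inner ℝ u (T u) : ℝ) := by
    intro t
    have h0 := qf_nonneg hA (u + t • v)
    have hexp : (inner ℝ (u + t • v) (T (u + t • v)) : ℝ)
        = (inner ℝ v (T v) : ℝ) * (t * t)
          + (2 * (inner ℝ u (T v) : ℝ)) * t + (inner ℝ u (T u) : ℝ) := by
      rw [map_add, _root_.map_smul, inner_add_left, inner_add_right, inner_add_right,
        real_inner_smul_left, real_inner_smul_left, real_inner_smul_right,
        real_inner_smul_right, hsym v u]
      ring
    linarith [hexp ▸ h0]
  have hd := discrim_le_zero key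
  rw [discrim] at hd
  nlinarith [hd]

lemma clm_norm_le {A : Matrix (Fin n) (Fin n) ℝ} {b : ℝ} (hb : 0 ≤ b)
    (hA : A.PosSemidef) (hub : (b • 1 - A).PosSemidef) (x : EuclideanSpace ℝ (Fin n)) :
    ‖Matrix.toEuclideanCLM (𝕜 := ℝ) A x‖ ≤ b * ‖x‖ := by
  have h1 : (inner ℝ (Matrix.toEuclideanCLM (𝕜 := ℝ) A x) (Matrix.toEuclideanCLM (𝕜 := ℝ) A x) : ℝ)
      = ‖Matrix.toEuclideanCLM (𝕜 := ℝ) A x‖ ^ 2 := real_inner_self_eq_norm_sq _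
  have hcs := qf_cs hA (Matrix.toEuclideanCLM (𝕜 := ℝ) A x) x
  have h2 := qf_upper hub (Matrix.toEuclideanCLM (𝕜 := ℝ) A x)
  have h3 := qf_upper hub x
  have hq1 := qf_nonneg hA (Matrix.toEuclideanCLM (𝕜 := ℝ) A x)
  have hq2 := qf_nonneg hA x
  set u := Matrix.toEuclideanCLM (𝕜 := ℝ) A x
  have h4 : ‖u‖ ^ 4 ≤ b ^ 2 * (‖u‖ ^ 2 * ‖x‖ ^ 2) := by nlinarith [norm_nonneg u, norm_nonneg x]
  have h5 : ‖u‖ ^ 2 ≤ (b * ‖x‖) ^ 2 := by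
    rcases eq_or_lt_of_le (norm_nonneg u) with h0 | h0
    · nlinarith [sq_nonneg (b * ‖x‖), h0.symm]
    · nlinarith [h4, h0, mul_pos h0 h0]
  calc ‖u‖ = Real.sqrt (‖u‖ ^ 2) := (Real.sqrt_sq (norm_nonneg u)).symm
  _ ≤ Real.sqrt ((b * ‖x‖) ^ 2) := Real.sqrt_le_sqrt h5
  _ = b * ‖x‖ := Real.sqrt_sq (by positivity)

lemma smul_one_posDef {a : ℝ} (ha : 0 < a) :
    ((a • 1 : Matrix (Fin n) (Fin n) ℝ)).PosDef := by
  refine Matrix.posDef_iff_dotProduct_mulVec.mpr ⟨?_, fun z hz => ?_⟩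
  · show _ = _
    rw [Matrix.conjTranspose_smul, Matrix.conjTranspose_one, star_trivial]
  · rw [Matrix.smul_mulVec, Matrix.one_mulVec, dotProduct_smul]
    have h : (0:ℝ) < star z ⬝ᵥ z := by
      rwa [Matrix.dotProduct_star_self_pos_iff]
    exact mul_pos ha h

lemma posDef_of_lower {A : Matrix (Fin n) (Fin n) ℝ} {a : ℝ} (ha : 0 < a)
    (hA : (A - a • 1).PosSemidef) : A.PosDef := by
  have h := Matrix.PosDef.posSemidef_add hA (smul_one_posDef ha)
  simpa using h

lemma inv_clm_norm_le {A : Matrix (Fin n) (Fin n) ℝ} {a : ℝ} (ha : 0 < a)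
    (hA : (A - a • 1).PosSemidef) (v : EuclideanSpace ℝ (Fin n)) :
    ‖Matrix.toEuclideanCLM (𝕜 := ℝ) A⁻¹ v‖ ≤ a⁻¹ * ‖v‖ := by
  have hApd := posDef_of_lower ha hA
  have hmul : A * A⁻¹ = 1 :=
    Matrix.mul_nonsing_inv _ ((Matrix.isUnit_iff_isUnit_det _).mp hApd.isUnit)
  set u := Matrix.toEuclideanCLM (𝕜 := ℝ) A⁻¹ v with hu
  have hTu : Matrix.toEuclideanCLM (𝕜 := ℝ) A u = v := by
    rw [hu, ← ContinuousLinearMap.mul_apply, ← _root_.map_mul, hmul, _root_.map_one,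
      ContinuousLinearMap.one_apply]
  have h1 : a * ‖u‖ ^ 2 ≤ (inner ℝ u (Matrix.toEuclideanCLM (𝕜 := ℝ) A u) : ℝ) := qf_lower hA u
  rw [hTu] at h1
  have h2 : (inner ℝ u v : ℝ) ≤ ‖u‖ * ‖v‖ := real_inner_le_norm u v
  rcases eq_or_lt_of_le (norm_nonneg u) with h0 | h0
  · rw [← h0]; positivity
  · rw [← mul_le_mul_iff_right₀ ha, ← mul_assoc, mul_inv_cancel₀ ha.ne', one_mul]
    nlinarith

lemma Bseq_nonneg {r s : ℝ} (hr : 0 ≤ r) (hs : 0 ≤ s) : ∀ i, 0 ≤ Bseq r s i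
  | 0 => le_refl 0
  | (i+1) => by
      have := Bseq_nonneg hr hs i
      simp only [Bseq]
      positivity

end AuxIN

set_option maxHeartbeats 1600000 in
theorem statement16
    (n m : ℕ) (hm : 1 < m)
    (f : ℕ → EuclideanSpace ℝ (Fin n) → ℝ)
    (g : ℕ → EuclideanSpace ℝ (Fin n) → EuclideanSpace ℝ (Fin n))
    (hess : ℕ → EuclideanSpace ℝ (Fin n) → Matrix (Fin n) (Fin n) ℝ)
    (hgrad : ∀ i ∈ Finset.Icc 1 m, ∀ y, HasGradientAt (f i) (g i y) y)
    (hhess : ∀ i ∈ Finset.Icc 1 m, ∀ y, HasFDerivAt (g i) (Matrix.toEuclideanCLM (𝕜 := ℝ) (hess i y)) y)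
    (hcont : ∀ i ∈ Finset.Icc 1 m, Continuous (hess i))
    (α : ℕ → ℝ) (hα : ∀ k, 1 ≤ k → 0 < α k)
    (x : ℕ → ℕ → EuclideanSpace ℝ (Fin n))
    (H : ℕ → ℕ → Matrix (Fin n) (Fin n) ℝ)
    (hH0 : H 1 0 = 0)
    (hHnext : ∀ k, 1 ≤ k → H (k+1) 0 = H k m)
    (hHrec : ∀ k, 1 ≤ k → ∀ i ∈ Finset.Icc 1 m, H k i = H k (i-1) + hess i (x k i))
    (hxnext : ∀ k, 1 ≤ k → x (k+1) 1 = x k (m+1))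
    (hiter : ∀ k, 1 ≤ k → ∀ i ∈ Finset.Icc 1 m,
      x k (i+1) = x k i - α k • (Matrix.toEuclideanCLM (𝕜 := ℝ) (H k i)⁻¹) (g i (x k i)))
    (X : Set (EuclideanSpace ℝ (Fin n))) (hX : IsCompact X)
    (hbound : ∀ k, 1 ≤ k → ∀ i ∈ Finset.Icc 1 m, x k i ∈ X)
    (c C : ℝ) (hc : 0 < c) (hcC : c ≤ C)
    (hlb : ∀ i ∈ Finset.Icc 1 m, ∀ y, (hess i y - c • 1).PosSemidef)
    (hub : ∀ i ∈ Finset.Icc 1 m, ∀ y, (C • (1 : Matrix (Fin n) (Fin n) ℝ) - hess i y).PosSemidef)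
    (η : ℝ) (hη : η ∈ Set.Ioo (0:ℝ) 1)
    (αstar : ℕ → ℝ)
    (hαstar : ∀ k, 1 ≤ k → αstar k =
      if x (k+1) 1 ≠ x k 1 then
        ((1 - η)/C) *
          (inner ℝ (x (k+1) 1 - x k 1) ((Matrix.toEuclideanCLM (𝕜 := ℝ) (H k m)) (x (k+1) 1 - x k 1)) : ℝ) /
          (‖x (k+1) 1 - x k 1‖ * (∑ i ∈ Finset.Icc 2 m, ‖x k i - x k 1‖)
            + ((m : ℝ)/2) * ‖x (k+1) 1 - x k 1‖^2)
      else 0)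
    (hstep : ∀ k, 1 ≤ k → 1 ≤ α k ∧ α k ≤ max 1 (αstar k))
    (M : ℝ) (hM : 0 < M)
    (hgg : ∀ i ∈ Finset.Icc 1 m, ∀ y, ‖g i y‖ ≤ M * ‖∑ j ∈ Finset.Icc 1 m, g j y‖)
    (Q φ : ℝ) (hQ : Q = C / c) (hφ : φ = 2 * (1 - η) * Q) :
    ∀ k, 2 ≤ k →
      ‖∑ j ∈ Finset.Icc 1 m, (g j (x k j) - g j (x k 1)
          + (α k)⁻¹ • (Matrix.toEuclideanCLM (𝕜 := ℝ) (hess j (x k j))) (x k 1 - x k j))‖ ≤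
        C * (α k / k + 1/(k:ℝ)) *
          (∑ j ∈ Finset.Icc 2 m, Bseq (1 + (2*Q/m) * max (1/(k:ℝ)) φ) (2*M/(c*m)) (j-1)) *
          ‖∑ i ∈ Finset.Icc 1 m, g i (x k 1)‖ := by
  intro k hk
  -- basic positivity facts
  have hk1 : 1 ≤ k := by omega
  have hkR : (2:ℝ) ≤ (k:ℝ) := by exact_mod_cast hk
  have hkpos : (0:ℝ) < (k:ℝ) := by linarith
  have hmR : (2:ℝ) ≤ (m:ℝ) := by exact_mod_cast hm
  have hmpos : (0:ℝ) < (m:ℝ) := by linarith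
  have hC : (0:ℝ) < C := lt_of_lt_of_le hc hcC
  have hQpos : 0 < Q := by rw [hQ]; positivity
  have hQ1 : 1 ≤ Q := by rw [hQ]; rw [le_div_iff₀ hc]; linarith
  have hφpos : 0 < φ := by rw [hφ]; have := hη.2; nlinarith
  have hα1 : 1 ≤ α k := (hstep k hk1).1
  have hαpos : 0 < α k := hα k hk1
  have hmaxpos : 0 < max (1/(k:ℝ)) φ := lt_of_lt_of_le (by positivity) (le_max_left _ _)
  have hr0 : (0:ℝ) ≤ 1 + 2*Q/m * max (1/(k:ℝ)) φ := by positivity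
  have hs0 : (0:ℝ) ≤ 2*M/(c*m) := by positivity
  have hBnn : ∀ j, 0 ≤ Bseq (1 + 2*Q/m * max (1/(k:ℝ)) φ) (2*M/(c*m)) j :=
    Bseq_nonneg hr0 hs0
  -- Hermitian / PSD facts about the Hessians
  have hpsd : ∀ i ∈ Finset.Icc 1 m, ∀ y, (hess i y).PosSemidef := by
    intro i hi y
    have h := (hlb i hi y).add (smul_one_posDef (n := n) hc).posSemidef
    simpa using h
  -- pointwise norm bound for the Hessian CLM
  have hessnorm : ∀ i ∈ Finset.Icc 1 m, ∀ y v,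
      ‖Matrix.toEuclideanCLM (𝕜 := ℝ) (hess i y) v‖ ≤ C * ‖v‖ := by
    intro i hi y v
    exact clm_norm_le hC.le (hpsd i hi y) (hub i hi y) v
  -- gradients are C-Lipschitz
  have hlip : ∀ i ∈ Finset.Icc 1 m, ∀ y z, ‖g i y - g i z‖ ≤ C * ‖y - z‖ := by
    intro i hi y z
    exact convex_univ.norm_image_sub_le_of_norm_hasFDerivWithin_le
      (fun w _ => (hhess i hi w).hasFDerivWithinAt)
      (fun w _ => ContinuousLinearMap.opNorm_le_bound _ hC.le (fun v => hessnorm i hi w v))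
      (Set.mem_univ z) (Set.mem_univ y)
  -- two-sided bounds on the aggregated Hessians H
  have Hb : ∀ K, 1 ≤ K → ∀ i, i ≤ m →
      (H K i - (((((K-1)*m + i : ℕ)) : ℝ) * c) • 1).PosSemidef ∧
      ((((((K-1)*m + i : ℕ)) : ℝ) * C) • 1 - H K i).PosSemidef := by
    have step_i : ∀ K, 1 ≤ K → ∀ i, i < m →
        ((H K i - (((((K-1)*m + i : ℕ)) : ℝ) * c) • 1).PosSemidef ∧
         ((((((K-1)*m + i : ℕ)) : ℝ) * C) • 1 - H K i).PosSemidef) →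
        ((H K (i+1) - (((((K-1)*m + (i+1) : ℕ)) : ℝ) * c) • 1).PosSemidef ∧
         ((((((K-1)*m + (i+1) : ℕ)) : ℝ) * C) • 1 - H K (i+1)).PosSemidef) := by
      intro K hK i him ⟨h1, h2⟩
      have hmem : (i+1) ∈ Finset.Icc 1 m := by
        rw [Finset.mem_Icc]; omega
      have hrec := hHrec K hK (i+1) hmem
      rw [Nat.add_sub_cancel] at hrec
      have hco : (((((K-1)*m + (i+1) : ℕ)) : ℝ)) = ((((K-1)*m + i : ℕ)) : ℝ) + 1 := by
        push_cast; ring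
      constructor
      · have hadd := h1.add (hlb (i+1) hmem (x K (i+1)))
        have heq : H K (i+1) - (((((K-1)*m + (i+1) : ℕ)) : ℝ) * c) • 1 =
            (H K i - (((((K-1)*m + i : ℕ)) : ℝ) * c) • 1) +
            (hess (i+1) (x K (i+1)) - c • 1) := by
          rw [hrec, hco, add_mul, one_mul, add_smul]
          abel
        rw [heq]; exact hadd
      · have hadd := h2.add (hub (i+1) hmem (x K (i+1)))
        have heq : (((((K-1)*m + (i+1) : ℕ)) : ℝ) * C) • 1 - H K (i+1) =
            ((((((K-1)*m + i : ℕ)) : ℝ) * C) • 1 - H K i) +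
            (C • 1 - hess (i+1) (x K (i+1))) := by
          rw [hrec, hco, add_mul, one_mul, add_smul]
          abel
        rw [heq]; exact hadd
      
    have aux : ∀ K, 1 ≤ K →
        ((H K 0 - (((((K-1)*m + 0 : ℕ)) : ℝ) * c) • 1).PosSemidef ∧
         ((((((K-1)*m + 0 : ℕ)) : ℝ) * C) • 1 - H K 0).PosSemidef) →
        ∀ i, i ≤ m →
        ((H K i - (((((K-1)*m + i : ℕ)) : ℝ) * c) • 1).PosSemidef ∧
         ((((((K-1)*m + i : ℕ)) : ℝ) * C) • 1 - H K i).PosSemidef) := by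
      intro K hK h0 i
      induction i with
      | zero => intro _; exact h0
      | succ j ih =>
          intro hj
          exact step_i K hK j (by omega) (ih (by omega))
    have h0 : ∀ K, 1 ≤ K →
        ((H K 0 - (((((K-1)*m + 0 : ℕ)) : ℝ) * c) • 1).PosSemidef ∧
         ((((((K-1)*m + 0 : ℕ)) : ℝ) * C) • 1 - H K 0).PosSemidef) := by
      intro K hK
      induction K, hK using Nat.le_induction with
      | base =>
          have h00 : (((1-1)*m + 0 : ℕ) : ℝ) = 0 := by norm_num
          rw [hH0, h00]
          constructor <;> simpa using Matrix.PosSemidef.zero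
      | succ K hK ih =>
          have hKm := aux K hK ih m le_rfl
          have hco : ((K+1-1)*m + 0 : ℕ) = (K-1)*m + m := by
            obtain ⟨K', rfl⟩ := Nat.exists_eq_add_of_le hK
            simp [Nat.add_sub_cancel, Nat.add_mul, Nat.succ_mul]
            ring
          rw [hHnext K hK, hco]
          exact hKm
    exact fun K hK i hi => aux K hK (h0 K hK) i hi
  -- inverse bound for our fixed k
  have hHinv : ∀ i, i ≤ m → ∀ v,
      ‖Matrix.toEuclideanCLM (𝕜 := ℝ) ((H k i)⁻¹) v‖ ≤ (2/((k:ℝ)*m*c)) * ‖v‖ := by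
    intro i him v
    have hP := (Hb k hk1 i him).1
    have hcast : (((k-1)*m + i : ℕ) : ℝ) = ((k:ℝ)-1)*(m:ℝ) + (i:ℝ) := by
      have h1 : ((k-1 : ℕ) : ℝ) = (k:ℝ) - 1 := by
        have := Nat.cast_sub (R := ℝ) hk1
        simpa using this
      push_cast [h1]
      ring
    have hipos : (0:ℝ) ≤ (i:ℝ) := by positivity
    have h9 : (1:ℝ) ≤ (k:ℝ) - 1 := by linarith
    have h10 : (2:ℝ) ≤ ((k:ℝ)-1)*(m:ℝ) := by
      have := mul_le_mul h9 hmR (by norm_num) (by linarith)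
      linarith
    have hμpos : 0 < (((k-1)*m + i : ℕ) : ℝ) * c := by
      rw [hcast]; exact mul_pos (by linarith) hc
    have h1 := inv_clm_norm_le hμpos hP v
    refine le_trans h1 ?_
    have hhalf : ((k:ℝ)*m*c)/2 ≤ (((k-1)*m + i : ℕ) : ℝ) * c := by
      rw [hcast]
      have key : (0:ℝ) ≤ ((k:ℝ)-2)*((m:ℝ)*c) := mul_nonneg (by linarith) (by positivity)
      have hic : (0:ℝ) ≤ (i:ℝ)*c := by positivity
      nlinarith [key, hic]
    have h2 : ((((k-1)*m + i : ℕ) : ℝ) * c)⁻¹ ≤ (((k:ℝ)*m*c)/2)⁻¹ :=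
      inv_anti₀ (by positivity) hhalf
    have h3 : (((k:ℝ)*m*c)/2)⁻¹ = 2/((k:ℝ)*m*c) := by
      rw [inv_div]
    refine mul_le_mul_of_nonneg_right ?_ (norm_nonneg v)
    rw [← h3]; exact h2
  -- step size bound
  have hαstarle : αstar k ≤ φ * k := by
    rw [hαstar k hk1]
    split_ifs with hd
    · have hdne : x (k+1) 1 - x k 1 ≠ 0 := sub_ne_zero.mpr hd
      have hdpos : 0 < ‖x (k+1) 1 - x k 1‖ := norm_pos_iff.mpr hdne
      have hub' := (Hb k hk1 m le_rfl).2
      have hlow' := (Hb k hk1 m le_rfl).1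
      have hkm : (((k-1)*m + m : ℕ) : ℝ) ≤ (k:ℝ)*(m:ℝ) := by
        have hco : ((k-1)*m + m : ℕ) = k*m := by
          obtain ⟨K', rfl⟩ := Nat.exists_eq_add_of_le hk1
          simp [Nat.add_sub_cancel, Nat.add_mul, Nat.succ_mul]
          ring
        rw [hco]; push_cast; exact le_rfl
      have hnum : (inner ℝ (x (k+1) 1 - x k 1)
            ((Matrix.toEuclideanCLM (𝕜 := ℝ) (H k m)) (x (k+1) 1 - x k 1)) : ℝ) ≤
          (k:ℝ)*(m:ℝ)*C*‖x (k+1) 1 - x k 1‖^2 := by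
        refine le_trans (qf_upper hub' _) ?_
        have h11 := mul_le_mul_of_nonneg_right hkm
          (mul_nonneg hC.le (sq_nonneg ‖x (k+1) 1 - x k 1‖))
        nlinarith [h11]
      have hnum0 : 0 ≤ (inner ℝ (x (k+1) 1 - x k 1)
            ((Matrix.toEuclideanCLM (𝕜 := ℝ) (H k m)) (x (k+1) 1 - x k 1)) : ℝ) := by
        refine le_trans ?_ (qf_lower hlow' _)
        have hc0 : 0 ≤ (((k-1)*m + m : ℕ) : ℝ) * c := by positivity
        positivity
      have hsum0 : 0 ≤ ∑ i ∈ Finset.Icc 2 m, ‖x k i - x k 1‖ :=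
        Finset.sum_nonneg (fun _ _ => norm_nonneg _)
      have hden : ((m:ℝ)/2) * ‖x (k+1) 1 - x k 1‖^2 ≤
          ‖x (k+1) 1 - x k 1‖ * (∑ i ∈ Finset.Icc 2 m, ‖x k i - x k 1‖)
            + ((m:ℝ)/2) * ‖x (k+1) 1 - x k 1‖^2 := by
        have h12 := mul_nonneg (norm_nonneg (x (k+1) 1 - x k 1)) hsum0
        linarith
      have hdenpos : 0 < ((m:ℝ)/2) * ‖x (k+1) 1 - x k 1‖^2 := by positivity
      have hη1 : 0 < 1 - η := by have := hη.2; linarith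
      refine le_trans (div_le_div₀ (by positivity)
        (mul_le_mul_of_nonneg_left hnum (by positivity)) hdenpos hden) ?_
      have heval : (1 - η)/C * ((k:ℝ)*(m:ℝ)*C*‖x (k+1) 1 - x k 1‖^2) /
          (((m:ℝ)/2) * ‖x (k+1) 1 - x k 1‖^2) = 2*(1-η)*(k:ℝ) := by
        field_simp
      rw [heval, hφ]
      have hQm1 : (0:ℝ) ≤ Q - 1 := by linarith
      have h13 : (0:ℝ) ≤ 2*(1-η)*(Q-1)*(k:ℝ) := by positivity
      linarith
    · positivity
  have hγmax : α k / (k:ℝ) ≤ max (1/(k:ℝ)) φ := by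
    have h2 := (hstep k hk1).2
    rcases le_max_iff.mp h2 with h | h
    · refine le_trans ?_ (le_max_left _ _)
      exact div_le_div₀ (by norm_num) h hkpos le_rfl
    · refine le_trans ?_ (le_max_right _ _)
      rw [div_le_iff₀ hkpos]
      calc α k ≤ αstar k := h
      _ ≤ φ * k := hαstarle
  -- displacement bound
  have hdisp : ∀ i, 1 ≤ i → i ≤ m →
      ‖x k i - x k 1‖ ≤ (α k / (k:ℝ)) *
        Bseq (1 + 2*Q/m * max (1/(k:ℝ)) φ) (2*M/(c*m)) (i-1) *
        ‖∑ i ∈ Finset.Icc 1 m, g i (x k 1)‖ := by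
    intro i h1i
    induction i, h1i using Nat.le_induction with
    | base => intro _; simp [Bseq]
    | succ i h1i ih =>
        intro him1
        have him : i ≤ m := by omega
        have hmem : i ∈ Finset.Icc 1 m := by rw [Finset.mem_Icc]; exact ⟨h1i, him⟩
        have hIH := ih him
        have hit := hiter k hk1 i hmem
        have hBi : Bseq (1 + 2*Q/m * max (1/(k:ℝ)) φ) (2*M/(c*m)) (i+1-1) =
            (1 + 2*Q/m * max (1/(k:ℝ)) φ) *
              Bseq (1 + 2*Q/m * max (1/(k:ℝ)) φ) (2*M/(c*m)) (i-1) + 2*M/(c*m) := by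
          have h : i + 1 - 1 = (i-1) + 1 := by omega
          rw [h]; simp [Bseq]
        have h1 : x k (i+1) - x k 1 = (x k i - x k 1) -
            α k • ((Matrix.toEuclideanCLM (𝕜 := ℝ) (H k i)⁻¹) (g i (x k i))) := by
          rw [hit]; abel
        have hgb : ‖g i (x k i)‖ ≤ M * ‖∑ i ∈ Finset.Icc 1 m, g i (x k 1)‖
            + C * ‖x k i - x k 1‖ := by
          have hdecomp : g i (x k i) = g i (x k 1) + (g i (x k i) - g i (x k 1)) := by abel
          calc ‖g i (x k i)‖ = ‖g i (x k 1) + (g i (x k i) - g i (x k 1))‖ := by rw [← hdecomp]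
          _ ≤ ‖g i (x k 1)‖ + ‖g i (x k i) - g i (x k 1)‖ := norm_add_le _ _
          _ ≤ M * ‖∑ i ∈ Finset.Icc 1 m, g i (x k 1)‖ + C * ‖x k i - x k 1‖ :=
              add_le_add (hgg i hmem _) (hlip i hmem _ _)
        have hvb : ‖(Matrix.toEuclideanCLM (𝕜 := ℝ) (H k i)⁻¹) (g i (x k i))‖ ≤
            2/((k:ℝ)*m*c) * (M * ‖∑ i ∈ Finset.Icc 1 m, g i (x k 1)‖ + C * ‖x k i - x k 1‖) := by
          refine le_trans (hHinv i him _) ?_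
          exact mul_le_mul_of_nonneg_left hgb (by positivity)
        calc ‖x k (i+1) - x k 1‖
            = ‖(x k i - x k 1) - α k • ((Matrix.toEuclideanCLM (𝕜 := ℝ) (H k i)⁻¹) (g i (x k i)))‖ := by
              rw [h1]
        _ ≤ ‖x k i - x k 1‖ + ‖α k • ((Matrix.toEuclideanCLM (𝕜 := ℝ) (H k i)⁻¹) (g i (x k i)))‖ :=
              norm_sub_le _ _
        _ = ‖x k i - x k 1‖ + α k * ‖(Matrix.toEuclideanCLM (𝕜 := ℝ) (H k i)⁻¹) (g i (x k i))‖ := by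
              rw [norm_smul, Real.norm_of_nonneg hαpos.le]
        _ ≤ ‖x k i - x k 1‖ + α k * (2/((k:ℝ)*m*c) *
              (M * ‖∑ i ∈ Finset.Icc 1 m, g i (x k 1)‖ + C * ‖x k i - x k 1‖)) := by
              have := mul_le_mul_of_nonneg_left hvb hαpos.le
              linarith
        _ = (1 + 2*Q/m * (α k / (k:ℝ))) * ‖x k i - x k 1‖
              + (α k / (k:ℝ)) * (2*M/(c*m)) * ‖∑ i ∈ Finset.Icc 1 m, g i (x k 1)‖ := by
              rw [hQ]; field_simp; ring
        _ ≤ (1 + 2*Q/m * max (1/(k:ℝ)) φ) * ‖x k i - x k 1‖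
              + (α k / (k:ℝ)) * (2*M/(c*m)) * ‖∑ i ∈ Finset.Icc 1 m, g i (x k 1)‖ := by
              have h2Q : (0:ℝ) ≤ 2*Q/m := by positivity
              have := mul_le_mul_of_nonneg_left hγmax h2Q
              nlinarith [norm_nonneg (x k i - x k 1)]
        _ ≤ (1 + 2*Q/m * max (1/(k:ℝ)) φ) * ((α k / (k:ℝ)) *
              Bseq (1 + 2*Q/m * max (1/(k:ℝ)) φ) (2*M/(c*m)) (i-1) *
              ‖∑ i ∈ Finset.Icc 1 m, g i (x k 1)‖)
              + (α k / (k:ℝ)) * (2*M/(c*m)) * ‖∑ i ∈ Finset.Icc 1 m, g i (x k 1)‖ := by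
              have := mul_le_mul_of_nonneg_left hIH hr0
              linarith
        _ = (α k / (k:ℝ)) * ((1 + 2*Q/m * max (1/(k:ℝ)) φ) *
              Bseq (1 + 2*Q/m * max (1/(k:ℝ)) φ) (2*M/(c*m)) (i-1) + 2*M/(c*m)) *
              ‖∑ i ∈ Finset.Icc 1 m, g i (x k 1)‖ := by ring
        _ = (α k / (k:ℝ)) * Bseq (1 + 2*Q/m * max (1/(k:ℝ)) φ) (2*M/(c*m)) (i+1-1) *
              ‖∑ i ∈ Finset.Icc 1 m, g i (x k 1)‖ := by rw [hBi]
  -- final assembly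
  have hterm : ∀ j ∈ Finset.Icc 1 m,
      ‖g j (x k j) - g j (x k 1)
          + (α k)⁻¹ • (Matrix.toEuclideanCLM (𝕜 := ℝ) (hess j (x k j))) (x k 1 - x k j)‖ ≤
        (C * (1 + (α k)⁻¹) * (α k / (k:ℝ)) * ‖∑ i ∈ Finset.Icc 1 m, g i (x k 1)‖) *
          Bseq (1 + 2*Q/m * max (1/(k:ℝ)) φ) (2*M/(c*m)) (j-1) := by
    intro j hj
    obtain ⟨hj1, hjm⟩ := Finset.mem_Icc.mp hj
    have hD := hdisp j hj1 hjm
    have hinv0 : (0:ℝ) ≤ (α k)⁻¹ := by positivity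
    calc ‖g j (x k j) - g j (x k 1)
          + (α k)⁻¹ • (Matrix.toEuclideanCLM (𝕜 := ℝ) (hess j (x k j))) (x k 1 - x k j)‖
        ≤ ‖g j (x k j) - g j (x k 1)‖
          + ‖(α k)⁻¹ • (Matrix.toEuclideanCLM (𝕜 := ℝ) (hess j (x k j))) (x k 1 - x k j)‖ :=
          norm_add_le _ _
    _ = ‖g j (x k j) - g j (x k 1)‖
          + (α k)⁻¹ * ‖(Matrix.toEuclideanCLM (𝕜 := ℝ) (hess j (x k j))) (x k 1 - x k j)‖ := by
          rw [norm_smul, Real.norm_of_nonneg hinv0]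
    _ ≤ C * ‖x k j - x k 1‖ + (α k)⁻¹ * (C * ‖x k 1 - x k j‖) :=
          add_le_add (hlip j hj _ _)
            (mul_le_mul_of_nonneg_left (hessnorm j hj (x k j) _) hinv0)
    _ = C * (1 + (α k)⁻¹) * ‖x k j - x k 1‖ := by
          rw [norm_sub_rev (x k 1)]; ring
    _ ≤ C * (1 + (α k)⁻¹) * ((α k / (k:ℝ)) *
          Bseq (1 + 2*Q/m * max (1/(k:ℝ)) φ) (2*M/(c*m)) (j-1) *
          ‖∑ i ∈ Finset.Icc 1 m, g i (x k 1)‖) := by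
          have hC1 : (0:ℝ) ≤ C * (1 + (α k)⁻¹) := by positivity
          exact mul_le_mul_of_nonneg_left hD hC1
    _ = (C * (1 + (α k)⁻¹) * (α k / (k:ℝ)) * ‖∑ i ∈ Finset.Icc 1 m, g i (x k 1)‖) *
          Bseq (1 + 2*Q/m * max (1/(k:ℝ)) φ) (2*M/(c*m)) (j-1) := by ring
  have hsplit : ∑ j ∈ Finset.Icc 1 m, Bseq (1 + 2*Q/m * max (1/(k:ℝ)) φ) (2*M/(c*m)) (j-1)
      = ∑ j ∈ Finset.Icc 2 m, Bseq (1 + 2*Q/m * max (1/(k:ℝ)) φ) (2*M/(c*m)) (j-1) := by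
    have h : Finset.Icc 1 m = insert 1 (Finset.Icc 2 m) := by
      ext a; simp only [Finset.mem_Icc, Finset.mem_insert]; omega
    rw [h, Finset.sum_insert (by simp [Finset.mem_Icc])]
    simp [Bseq]
  calc ‖∑ j ∈ Finset.Icc 1 m, (g j (x k j) - g j (x k 1)
          + (α k)⁻¹ • (Matrix.toEuclideanCLM (𝕜 := ℝ) (hess j (x k j))) (x k 1 - x k j))‖
      ≤ ∑ j ∈ Finset.Icc 1 m, ‖g j (x k j) - g j (x k 1)
          + (α k)⁻¹ • (Matrix.toEuclideanCLM (𝕜 := ℝ) (hess j (x k j))) (x k 1 - x k j)‖ :=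
        norm_sum_le _ _
  _ ≤ ∑ j ∈ Finset.Icc 1 m, (C * (1 + (α k)⁻¹) * (α k / (k:ℝ)) *
        ‖∑ i ∈ Finset.Icc 1 m, g i (x k 1)‖) *
        Bseq (1 + 2*Q/m * max (1/(k:ℝ)) φ) (2*M/(c*m)) (j-1) :=
      Finset.sum_le_sum hterm
  _ = (C * (1 + (α k)⁻¹) * (α k / (k:ℝ)) * ‖∑ i ∈ Finset.Icc 1 m, g i (x k 1)‖) *
        ∑ j ∈ Finset.Icc 1 m, Bseq (1 + 2*Q/m * max (1/(k:ℝ)) φ) (2*M/(c*m)) (j-1) := by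
      rw [Finset.mul_sum]
  _ = (C * (1 + (α k)⁻¹) * (α k / (k:ℝ)) * ‖∑ i ∈ Finset.Icc 1 m, g i (x k 1)‖) *
        ∑ j ∈ Finset.Icc 2 m, Bseq (1 + 2*Q/m * max (1/(k:ℝ)) φ) (2*M/(c*m)) (j-1) := by
      rw [hsplit]
  _ = C * (α k / (k:ℝ) + 1/(k:ℝ)) *
        (∑ j ∈ Finset.Icc 2 m, Bseq (1 + 2*Q/m * max (1/(k:ℝ)) φ) (2*M/(c*m)) (j-1)) *
        ‖∑ i ∈ Finset.Icc 1 m, g i (x k 1)‖ := by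
      have hαne : α k ≠ 0 := hαpos.ne'
      have hkne : (k:ℝ) ≠ 0 := hkpos.ne'
      field_simp
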